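/- arXiv:2510.02077 — 2 statements merged into one kernel-verified Lean document; each statement's English description precedes it below -/
import Mathlib

section
/- Let N^{sym} be the (n−1)×(n−1) real symmetric tridiagonal matrix with diagonal entries sᵢ = 1 + kᵢ + k_{i+1} and off-diagonal entries (N^{sym})_{i,i+1} = (N^{sym})_{i+1,i} = (1 + 2k_{i+1})/2, where k₁,…,kₙ are nonnegative integers. Then N^{sym} is positive definite. -/
open Finset

lemma Nsym_key (c y : ℕ → ℝ) : ∀ n : ℕ,
    ∑ i ∈ Finset.range (n+1), ∑ j ∈ Finset.range (n+1),
      y i * ((if i = j then c i + c (i+1)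
        else if i + 1 = j then c j else if j + 1 = i then c i else 0) * y j)
    = ∑ j ∈ Finset.range (n+1),
        c j * ((if j = 0 then 0 else y (j-1)) + y j)^2 + c (n+1) * (y n)^2 := by
  intro n
  induction n with
  | zero => simp; ring
  | succ m ih =>
    rw [Finset.sum_range_succ]
    have h1 : ∀ i ∈ Finset.range (m+1),
        (∑ j ∈ Finset.range (m+2),
          y i * ((if i = j then c i + c (i+1)
            else if i + 1 = j then c j else if j + 1 = i then c i else 0) * y j))
        = (∑ j ∈ Finset.range (m+1),
          y i * ((if i = j then c i + c (i+1)
            else if i + 1 = j then c j else if j + 1 = i then c i else 0) * y j))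
          + (if i = m then y m * (c (m+1) * y (m+1)) else 0) := by
      intro i hi
      rw [Finset.sum_range_succ]
      simp only [Finset.mem_range] at hi
      congr 1
      by_cases h : i = m
      · subst h
        simp [Nat.ne_of_lt hi]
      · have h2 : i ≠ m + 1 := by omega
        have h3 : i + 1 ≠ m + 1 := by omega
        have h4 : (m+1) + 1 ≠ i := by omega
        simp [h, h2, h3, h4]
    rw [Finset.sum_congr rfl h1, Finset.sum_add_distrib, ih, Finset.sum_ite_eq'
      (Finset.range (m+1)) m]
    have hm : m ∈ Finset.range (m+1) := Finset.self_mem_range_succ m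
    rw [if_pos hm]
    -- last row sum
    have h2 : (∑ j ∈ Finset.range (m+2),
        y (m+1) * ((if m+1 = j then c (m+1) + c (m+2)
          else if (m+1) + 1 = j then c j else if j + 1 = m+1 then c (m+1) else 0) * y j))
        = y (m+1) * (c (m+1) * y m) + y (m+1) * ((c (m+1) + c (m+2)) * y (m+1)) := by
      rw [Finset.sum_range_succ]
      simp only [if_pos rfl]
      congr 1
      rw [Finset.sum_range_succ]
      have : (∑ j ∈ Finset.range m,
          y (m+1) * ((if m+1 = j then c (m+1) + c (m+2)
            else if (m+1) + 1 = j then c j else if j + 1 = m+1 then c (m+1) else 0) * y j)) = 0 := by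
        apply Finset.sum_eq_zero
        intro j hj
        simp only [Finset.mem_range] at hj
        have h2 : m + 1 ≠ j := by omega
        have h3 : m + 1 + 1 ≠ j := by omega
        have h4 : j + 1 ≠ m + 1 := by omega
        simp [h2, h3, h4, Nat.ne_of_lt hj]
      rw [this]
      have h5 : ¬(m + 1 = m) := by omega
      have h6 : ¬(m + 1 + 1 = m) := by omega
      simp [h5, h6]
    rw [h2]
    rw [Finset.sum_range_succ (fun j => c j * ((if j = 0 then 0 else y (j-1)) + y j)^2) (m+1)]
    rw [if_neg (Nat.succ_ne_zero m)]
    simp only [Nat.add_sub_cancel]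
    ring
open Matrix in
theorem Nsym_posDef (n : ℕ) (k : ℕ → ℕ) :
    (Matrix.of fun i j : Fin n =>
      if (i : ℕ) = (j : ℕ) then (1 : ℝ) + k ((i : ℕ) + 1) + k ((i : ℕ) + 2)
      else if (i : ℕ) + 1 = (j : ℕ) then (1 + 2 * (k ((j : ℕ) + 1) : ℝ)) / 2
      else if (j : ℕ) + 1 = (i : ℕ) then (1 + 2 * (k ((i : ℕ) + 1) : ℝ)) / 2
      else 0).PosDef := by
  set c : ℕ → ℝ := fun j => (1 + 2 * (k (j+1) : ℝ)) / 2 with hc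
  have hcpos : ∀ j, 0 < c j := by
    intro j; rw [hc]; positivity
  rw [Matrix.posDef_iff_dotProduct_mulVec]
  constructor
  · -- Hermitian
    ext i j
    simp only [Matrix.conjTranspose_apply, Matrix.of_apply, star_trivial]
    split_ifs <;> first | rfl | omega | simp_all
  · intro x hx
    set y : ℕ → ℝ := fun i => if h : i < n then x ⟨i, h⟩ else 0 with hy
    have hyx : ∀ i : Fin n, y (i : ℕ) = x i := by
      intro i; rw [hy]; simp [i.isLt]
    have hmv : ∀ i : Fin n, ((Matrix.of fun i j : Fin n =>
        if (i : ℕ) = (j : ℕ) then (1 : ℝ) + k ((i : ℕ) + 1) + k ((i : ℕ) + 2)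
        else if (i : ℕ) + 1 = (j : ℕ) then (1 + 2 * (k ((j : ℕ) + 1) : ℝ)) / 2
        else if (j : ℕ) + 1 = (i : ℕ) then (1 + 2 * (k ((i : ℕ) + 1) : ℝ)) / 2
        else 0) *ᵥ x) i
        = ∑ j ∈ Finset.range n,
            (if (i : ℕ) = j then c (i : ℕ) + c ((i : ℕ)+1)
              else if (i : ℕ) + 1 = j then c j else if j + 1 = (i : ℕ) then c (i : ℕ) else 0) * y j := by
      intro i
      rw [Matrix.mulVec, dotProduct,
        ← Fin.sum_univ_eq_sum_range (fun j =>
          (if (i : ℕ) = j then c (i : ℕ) + c ((i : ℕ)+1)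
            else if (i : ℕ) + 1 = j then c j else if j + 1 = (i : ℕ) then c (i : ℕ) else 0) * y j) n]
      apply Finset.sum_congr rfl
      intro j _
      rw [hyx j, Matrix.of_apply]
      congr 1
      by_cases h1 : (i : ℕ) = (j : ℕ)
      · rw [if_pos h1, if_pos h1, hc]
        push_cast
        ring
      · rw [if_neg h1, if_neg h1]
    have hQ : star x ⬝ᵥ ((Matrix.of fun i j : Fin n =>
        if (i : ℕ) = (j : ℕ) then (1 : ℝ) + k ((i : ℕ) + 1) + k ((i : ℕ) + 2)
        else if (i : ℕ) + 1 = (j : ℕ) then (1 + 2 * (k ((j : ℕ) + 1) : ℝ)) / 2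
        else if (j : ℕ) + 1 = (i : ℕ) then (1 + 2 * (k ((i : ℕ) + 1) : ℝ)) / 2
        else 0) *ᵥ x)
        = ∑ i ∈ Finset.range n, ∑ j ∈ Finset.range n,
            y i * ((if i = j then c i + c (i+1)
              else if i + 1 = j then c j else if j + 1 = i then c i else 0) * y j) := by
      rw [dotProduct,
        ← Fin.sum_univ_eq_sum_range (fun i => ∑ j ∈ Finset.range n,
          y i * ((if i = j then c i + c (i+1)
            else if i + 1 = j then c j else if j + 1 = i then c i else 0) * y j)) n]
      apply Finset.sum_congr rfl
      intro i _
      rw [hmv i, Finset.mul_sum, star_trivial, ← hyx i]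
    rw [hQ]
    -- n must be positive
    rcases n with _ | m
    · exact absurd (Subsingleton.elim x 0) hx
    rw [Nsym_key c y m]
    -- find minimal nonzero index
    have hex : ∃ i, y i ≠ 0 := by
      obtain ⟨i, hi⟩ := Function.ne_iff.mp hx
      exact ⟨(i : ℕ), by rw [hyx i]; exact hi⟩
    set i₀ := Nat.find hex with hi₀
    have hyi₀ : y i₀ ≠ 0 := Nat.find_spec hex
    have hmin : ∀ j < i₀, y j = 0 := by
      intro j hj
      by_contra h
      exact absurd hj (Nat.not_lt.mpr (Nat.find_le h))
    have hi₀lt : i₀ < m + 1 := by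
      by_contra h
      apply hyi₀
      simp only [hy]
      rw [dif_neg h]
    have hw : ((if i₀ = 0 then 0 else y (i₀ - 1)) + y i₀) ≠ 0 := by
      by_cases h0 : i₀ = 0
      · simpa [h0] using hyi₀
      · rw [if_neg h0, hmin (i₀ - 1) (by omega), zero_add]; exact hyi₀
    apply add_pos_of_pos_of_nonneg
    · apply Finset.sum_pos'
      · intro j _; positivity
      · refine ⟨i₀, Finset.mem_range.mpr hi₀lt, ?_⟩
        apply mul_pos (hcpos i₀)
        exact lt_of_le_of_ne (sq_nonneg _) (Ne.symm (pow_ne_zero 2 hw))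
    · positivity
end

section
/- Let H be a positive-definite Hermitian form and J a skew-Hermitian form on ℂᵐ (i.e., J* = −J), and suppose δ ∈ ℂ and v ∈ ℂᵐ with v ≠ 0 satisfy δ·(v*Hv) + (1 + δ/2)·(v*Jv) = 0. Then |δ + 1| = 1. In particular, if A(t) = (t−1)·N^{sym} + (t+1)/2·J with N^{sym} real symmetric positive definite and J real skew-symmetric, then every t ∈ ℂ with det A(t) = 0 satisfies |t| = 1. -/
open Matrix ComplexOrder in
private lemma key_lemma : ∀ (m : ℕ) (H J : Matrix (Fin m) (Fin m) ℂ), H.PosDef → Jᴴ = -J →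
      ∀ (δ : ℂ) (v : Fin m → ℂ), v ≠ 0 →
        δ * (star v ⬝ᵥ H.mulVec v) + (1 + δ / 2) * (star v ⬝ᵥ J.mulVec v) = 0 →
        ‖δ + 1‖ = 1 := by
  intro m H J hH hJ δ v hv heq
  set h : ℂ := star v ⬝ᵥ H.mulVec v with hdef
  set g : ℂ := star v ⬝ᵥ J.mulVec v with gdef
  have hpos : 0 < h := hH.dotProduct_mulVec_pos hv
  rw [Complex.lt_def] at hpos
  have hre : 0 < h.re := by simpa using hpos.1
  have him : h.im = 0 := by simpa using hpos.2.symm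
  have hg : star g = -g := by
    have h1 : g = star (star (J *ᵥ v) ⬝ᵥ v) := star_dotProduct _ _
    calc star g = star (J *ᵥ v) ⬝ᵥ v := by rw [h1, star_star]
      _ = (star v ᵥ* Jᴴ) ⬝ᵥ v := by rw [star_mulVec]
      _ = star v ⬝ᵥ (Jᴴ *ᵥ v) := (dotProduct_mulVec _ _ _).symm
      _ = -g := by rw [hJ, neg_mulVec, dotProduct_neg, gdef]
  have hgre : g.re = 0 := by
    have := congrArg Complex.re hg
    simp [Complex.star_def] at this
    linarith
  have hRe := congrArg Complex.re heq
  have hIm := congrArg Complex.im heq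
  simp [Complex.add_re, Complex.mul_re, Complex.mul_im, Complex.add_im,
    Complex.div_re, Complex.div_im, him, hgre] at hRe hIm
  have key : (δ.re ^ 2 + δ.im ^ 2 + 2 * δ.re) * h.re = 0 := by
    linear_combination (δ.re + 2) * hRe + δ.im * hIm
  have hzero : δ.re ^ 2 + δ.im ^ 2 + 2 * δ.re = 0 := by
    rcases mul_eq_zero.mp key with h' | h'
    · exact h'
    · exact absurd h' (ne_of_gt hre)
  have hx : (δ.re + 1) ^ 2 + δ.im ^ 2 = 1 := by nlinarith [hzero]
  have habs2 : ‖δ + 1‖ ^ 2 = 1 := by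
    rw [Complex.sq_norm, Complex.normSq_apply]
    simp only [Complex.add_re, Complex.add_im, Complex.one_re, Complex.one_im, add_zero]
    nlinarith [hx]
  nlinarith [norm_nonneg (δ + 1), habs2]

open Matrix ComplexOrder in
private lemma map_posDef {m : ℕ} {N : Matrix (Fin m) (Fin m) ℝ} (hN : N.PosDef) :
    (N.map (Complex.ofReal)).PosDef := by
  have hstar : Function.Semiconj Complex.ofReal (star : ℝ → ℝ) star := fun x => by
    simp [Complex.star_def, Complex.conj_ofReal]
  have herm : (N.map (Complex.ofReal)).IsHermitian := hN.1.map Complex.ofReal hstar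
  have hps : (N.map (Complex.ofReal)).PosSemidef := by
    obtain ⟨B, hB⟩ : ∃ B : Matrix (Fin m) (Fin m) ℝ, N = Bᴴ * B := by
      open scoped MatrixOrder Matrix.Norms.L2Operator in
      exact CStarAlgebra.nonneg_iff_eq_star_mul_self.mp hN.posSemidef.nonneg
    refine (show N.map Complex.ofReal = (B.map Complex.ofReal)ᴴ * B.map Complex.ofReal from ?_) ▸
      posSemidef_conjTranspose_mul_self _
    rw [← conjTranspose_map _ hstar]
    ext i j
    simp [hB, Matrix.mul_apply]
  have hdet : (N.map (Complex.ofReal)).det ≠ 0 := by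
    have hd : (N.map Complex.ofReal).det = Complex.ofReal N.det := by
      rw [show N.map Complex.ofReal = Complex.ofRealHom.mapMatrix N from rfl,
        ← RingHom.map_det]
      rfl
    rw [hd]
    simpa using hN.det_pos.ne'
  refine PosDef.of_dotProduct_mulVec_pos herm fun x hx => ?_
  have h1 : 0 ≤ star x ⬝ᵥ (N.map Complex.ofReal) *ᵥ x := hps.dotProduct_mulVec_nonneg x
  rcases eq_or_lt_of_le h1 with h2 | h2
  · exfalso
    have hker := (hps.dotProduct_mulVec_zero_iff x).mp h2.symm
    exact hdet (Matrix.exists_mulVec_eq_zero_iff.mp ⟨x, hx, hker⟩)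
  · exact h2

open Matrix ComplexOrder in
theorem zeros_on_unit_circle :
    (∀ (m : ℕ) (H J : Matrix (Fin m) (Fin m) ℂ), H.PosDef → Jᴴ = -J →
      ∀ (δ : ℂ) (v : Fin m → ℂ), v ≠ 0 →
        δ * (star v ⬝ᵥ H.mulVec v) + (1 + δ / 2) * (star v ⬝ᵥ J.mulVec v) = 0 →
        ‖δ + 1‖ = 1) ∧
    (∀ (m : ℕ) (N J : Matrix (Fin m) (Fin m) ℝ), N.PosDef → Jᵀ = -J →
      ∀ t : ℂ,
        ((t - 1) • (N.map (Complex.ofReal)) +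
          ((t + 1) / 2) • (J.map (Complex.ofReal))).det = 0 →
        ‖t‖ = 1) := by
  constructor
  · exact key_lemma
  · intro m N J hN hJ t hdet
    obtain ⟨v, hv, hvec⟩ := Matrix.exists_mulVec_eq_zero_iff.mpr hdet
    have hstar : Function.Semiconj Complex.ofReal (star : ℝ → ℝ) star := fun x => by
      simp [Complex.star_def, Complex.conj_ofReal]
    have hJ' : (J.map Complex.ofReal)ᴴ = -(J.map Complex.ofReal) := by
      rw [← conjTranspose_map _ hstar]
      have : Jᴴ = Jᵀ := rfl
      rw [this, hJ]
      ext i j; simp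
    have heq : (t - 1) * (star v ⬝ᵥ (N.map Complex.ofReal).mulVec v) +
        (1 + (t - 1) / 2) * (star v ⬝ᵥ (J.map Complex.ofReal).mulVec v) = 0 := by
      have h0 := congrArg (fun w => star v ⬝ᵥ w) hvec
      simp only [add_mulVec, smul_mulVec, dotProduct_add, dotProduct_smul,
        dotProduct_zero, smul_eq_mul] at h0
      have h2 : (1 : ℂ) + (t - 1) / 2 = (t + 1) / 2 := by ring
      rw [h2]
      exact h0
    have := key_lemma m (N.map Complex.ofReal) (J.map Complex.ofReal)
      (map_posDef hN) hJ' (t - 1) v hv heq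
    simpa using this
end
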